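/- Let J = [c,d] with 0 < c < d. Suppose 0 < λ₁ < 1, λ_k ≥ 0 for 2 ≤ k ≤ n with ∑_{k=1}^n λ_k = 1, ψ_k = id, Ψ_k(x) = (Ξ_k(x))^{λ_k} with Ξ_k ∈ 𝒢(J;l_k,L_k), L_k ≥ l_k ≥ 0, and K := λ₁l₁ − ∑_{k=2}^n λ_k(L_k(M^{k−1}−1)/(M−1) − l_k δ^{k−1}) > 0, where 0 < δ < 1 < M. Then for each G ∈ 𝒢(J; K₁δ, K₀M), with K₀ = ∑ λ_k l_k δ^{k−1} and K₁ = ∑ λ_k L_k M^{k−1}, the equation ∏_{k=1}^n Ψ_k(g^k(x)) = G(x) has a unique solution g ∈ 𝒢(J;δ,M), and the solution satisfies the Lipschitz stability estimate ‖g − g₁‖_J ≤ (d/(cK))‖G − G₁‖_J for corresponding data G₁ and solution g₁. -/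

import Mathlib

open Set Finset

/-- The class 𝒢(J;δ,M). -/
def Gclass (c d δ M : ℝ) : Set (ℝ → ℝ) :=
  {g | ContinuousOn g (Set.Icc c d) ∧ Set.MapsTo g (Set.Icc c d) (Set.Icc c d) ∧
    g c = c ∧ g d = d ∧
    ∀ x ∈ Set.Icc c d, ∀ y ∈ Set.Icc c d, y ≤ x →
      (x / y) ^ δ ≤ g x / g y ∧ g x / g y ≤ (x / y) ^ M}

/-- Additive analogue of the class 𝒢. -/
def Aclass (a b δ M : ℝ) : Set (ℝ → ℝ) :=
  {h | ContinuousOn h (Set.Icc a b) ∧ Set.MapsTo h (Set.Icc a b) (Set.Icc a b) ∧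
    h a = a ∧ h b = b ∧
    ∀ x ∈ Set.Icc a b, ∀ y ∈ Set.Icc a b, y ≤ x →
      δ * (x - y) ≤ h x - h y ∧ h x - h y ≤ M * (x - y)}

namespace Aclass

variable {a b δ M : ℝ} {h h₁ h₂ : ℝ → ℝ}

lemma slope (hh : h ∈ Aclass a b δ M) {x y : ℝ} (hx : x ∈ Set.Icc a b)
    (hy : y ∈ Set.Icc a b) (hxy : y ≤ x) :
    δ * (x - y) ≤ h x - h y ∧ h x - h y ≤ M * (x - y) :=
  hh.2.2.2.2 x hx y hy hxy

lemma mono (hh : h ∈ Aclass a b δ M) (hδ : 0 ≤ δ) {x y : ℝ} (hx : x ∈ Set.Icc a b)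
    (hy : y ∈ Set.Icc a b) (hxy : y ≤ x) : h y ≤ h x := by
  have := (slope hh hx hy hxy).1
  nlinarith [mul_nonneg hδ (sub_nonneg.2 hxy)]

lemma iterate_mapsTo (hh : h ∈ Aclass a b δ M) (k : ℕ) :
    Set.MapsTo h^[k] (Set.Icc a b) (Set.Icc a b) :=
  hh.2.1.iterate k

lemma iterate_slope (hh : h ∈ Aclass a b δ M) (hδ : 0 ≤ δ) (hM0 : 0 ≤ M) (k : ℕ) {x y : ℝ}
    (hx : x ∈ Set.Icc a b) (hy : y ∈ Set.Icc a b) (hxy : y ≤ x) :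
    δ ^ k * (x - y) ≤ h^[k] x - h^[k] y ∧ h^[k] x - h^[k] y ≤ M ^ k * (x - y) := by
  induction k generalizing x y with
  | zero => simp
  | succ k ih =>
    have hx' := hh.2.1 hx
    have hy' := hh.2.1 hy
    have hxy' : h y ≤ h x := mono hh hδ hx hy hxy
    have h1 := slope hh hx hy hxy
    have h2 := ih hx' hy' hxy'
    rw [Function.iterate_succ_apply, Function.iterate_succ_apply]
    constructor
    · calc δ ^ (k+1) * (x - y) = δ ^ k * (δ * (x - y)) := by ring
      _ ≤ δ ^ k * (h x - h y) := by
          exact mul_le_mul_of_nonneg_left h1.1 (pow_nonneg hδ k)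
      _ ≤ h^[k] (h x) - h^[k] (h y) := h2.1
    · calc h^[k] (h x) - h^[k] (h y) ≤ M ^ k * (h x - h y) := h2.2
      _ ≤ M ^ k * (M * (x - y)) := mul_le_mul_of_nonneg_left h1.2 (pow_nonneg hM0 k)
      _ = M ^ (k+1) * (x - y) := by ring

lemma abs_sub_le (hh : h ∈ Aclass a b δ M) (hδ : 0 ≤ δ) {x y : ℝ}
    (hx : x ∈ Set.Icc a b) (hy : y ∈ Set.Icc a b) : |h x - h y| ≤ M * |x - y| := by
  rcases le_total y x with hxy | hxy
  · have h1 := slope hh hx hy hxy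
    have h0 : 0 ≤ h x - h y := le_trans (mul_nonneg hδ (by linarith)) h1.1
    rw [abs_of_nonneg h0, abs_of_nonneg (by linarith : (0:ℝ) ≤ x - y)]
    exact h1.2
  · have h1 := slope hh hy hx hxy
    have h0 : 0 ≤ h y - h x := le_trans (mul_nonneg hδ (by linarith)) h1.1
    rw [abs_sub_comm, abs_sub_comm x y, abs_of_nonneg h0,
      abs_of_nonneg (by linarith : (0:ℝ) ≤ y - x)]
    exact h1.2

/-- sup-distance of iterates. -/
lemma iterate_dist (hh₁ : h₁ ∈ Aclass a b δ M) (hh₂ : h₂ ∈ Aclass a b δ M)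
    (hδ : 0 ≤ δ) (hM0 : 0 ≤ M) {S : ℝ} (hS : ∀ t ∈ Set.Icc a b, |h₁ t - h₂ t| ≤ S) (j : ℕ) :
    ∀ t ∈ Set.Icc a b, |h₁^[j] t - h₂^[j] t| ≤ (∑ i ∈ Finset.range j, M ^ i) * S := by
  induction j with
  | zero => intro t ht; simp
    -- need S ≥ 0? sum over range 0 = 0, |0| ≤ 0 ok
  | succ j ih =>
    intro t ht
    have ht1 : h₁^[j] t ∈ Set.Icc a b := iterate_mapsTo hh₁ j ht
    have ht2 : h₂^[j] t ∈ Set.Icc a b := iterate_mapsTo hh₂ j ht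
    rw [Function.iterate_succ_apply', Function.iterate_succ_apply']
    have e1 : |h₁ (h₁^[j] t) - h₁ (h₂^[j] t)| ≤ M * |h₁^[j] t - h₂^[j] t| :=
      abs_sub_le hh₁ hδ ht1 ht2
    have e2 : |h₁ (h₂^[j] t) - h₂ (h₂^[j] t)| ≤ S := hS _ ht2
    have e3 := ih t ht
    calc |h₁ (h₁^[j] t) - h₂ (h₂^[j] t)|
        ≤ |h₁ (h₁^[j] t) - h₁ (h₂^[j] t)| + |h₁ (h₂^[j] t) - h₂ (h₂^[j] t)| := _root_.abs_sub_le _ _ _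
      _ ≤ M * ((∑ i ∈ Finset.range j, M ^ i) * S) + S := add_le_add (e1.trans (mul_le_mul_of_nonneg_left e3 hM0)) e2
      _ = (∑ i ∈ Finset.range (j+1), M ^ i) * S := by rw [geom_sum_succ]; ring

end Aclass

/-- The comparison operator Φ_h. -/
def PhiOp (n : ℕ) (lam : ℕ → ℝ) (ξ : ℕ → ℝ → ℝ) (h : ℝ → ℝ) (u : ℝ) : ℝ :=
  lam 1 * ξ 1 u + ∑ k ∈ Finset.Icc 2 n, lam k * ξ k (h^[k - 1] u)

def Kzero (δ : ℝ) (n : ℕ) (lam l : ℕ → ℝ) : ℝ :=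
  ∑ k ∈ Finset.Icc 1 n, lam k * l k * δ ^ (k - 1)

def Kone (M : ℝ) (n : ℕ) (lam L : ℕ → ℝ) : ℝ :=
  ∑ k ∈ Finset.Icc 1 n, lam k * L k * M ^ (k - 1)

noncomputable def ROp (M : ℝ) (n : ℕ) (lam L : ℕ → ℝ) : ℝ :=
  ∑ k ∈ Finset.Icc 2 n, lam k * (L k * (M ^ (k - 1) - 1) / (M - 1))

noncomputable def KOp (δ M : ℝ) (n : ℕ) (lam l L : ℕ → ℝ) : ℝ :=
  lam 1 * l 1 -
    ∑ k ∈ Finset.Icc 2 n, lam k * (L k * (M ^ (k - 1) - 1) / (M - 1) - l k * δ ^ (k - 1))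

/-- Standing hypotheses for the additive problem. -/
structure Setup (a b δ M : ℝ) (n : ℕ) (lam l L : ℕ → ℝ) (ξ : ℕ → ℝ → ℝ) : Prop where
  hab : a ≤ b
  hn : 1 ≤ n
  hδ0 : 0 < δ
  hδ1 : δ < 1
  hM : 1 < M
  hlam1 : 0 < lam 1
  hlamk : ∀ k, 2 ≤ k → k ≤ n → 0 ≤ lam k
  hsum : ∑ k ∈ Finset.Icc 1 n, lam k = 1
  hlL : ∀ k, 1 ≤ k → k ≤ n → 0 ≤ l k ∧ l k ≤ L k
  hξ : ∀ k, 1 ≤ k → k ≤ n → ξ k ∈ Aclass a b (l k) (L k)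
  hK : 0 < KOp δ M n lam l L

namespace Setup

variable {a b δ M : ℝ} {n : ℕ} {lam l L : ℕ → ℝ} {ξ : ℕ → ℝ → ℝ}

lemma Icc1_eq (S : Setup a b δ M n lam l L ξ) :
    Finset.Icc 1 n = insert 1 (Finset.Icc 2 n) := by
  have := S.hn
  ext k; simp only [Finset.mem_Icc, Finset.mem_insert]; omega

lemma one_not_mem : (1 : ℕ) ∉ Finset.Icc 2 n := by simp

lemma gs_eq (S : Setup a b δ M n lam l L ξ) (k : ℕ) :
    (M ^ (k - 1) - 1) / (M - 1) = ∑ i ∈ Finset.range (k - 1), M ^ i :=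
  (geom_sum_eq (ne_of_gt S.hM) _).symm

lemma gs_one_le (S : Setup a b δ M n lam l L ξ) {k : ℕ} (hk : 2 ≤ k) :
    1 ≤ (M ^ (k - 1) - 1) / (M - 1) := by
  rw [S.gs_eq k]
  have h0 : (0:ℕ) ∈ Finset.range (k - 1) := by simp; omega
  calc (1:ℝ) = M ^ 0 := by simp
  _ ≤ ∑ i ∈ Finset.range (k - 1), M ^ i :=
    Finset.single_le_sum (fun i _ => pow_nonneg (by linarith [S.hM]) i) h0

lemma gs_nonneg (S : Setup a b δ M n lam l L ξ) (k : ℕ) :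
    0 ≤ (M ^ (k - 1) - 1) / (M - 1) := by
  rw [S.gs_eq k]
  exact Finset.sum_nonneg fun i _ => pow_nonneg (by linarith [S.hM]) i

lemma term_nonneg (S : Setup a b δ M n lam l L ξ) {k : ℕ} (hk : k ∈ Finset.Icc 2 n) :
    0 ≤ lam k * (L k * (M ^ (k - 1) - 1) / (M - 1) - l k * δ ^ (k - 1)) := by
  rw [Finset.mem_Icc] at hk
  have hl := S.hlL k (by omega) hk.2
  have h1 := S.gs_one_le hk.1
  have hδp : δ ^ (k - 1) ≤ 1 :=
    pow_le_one₀ (le_of_lt S.hδ0) (le_of_lt S.hδ1)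
  have hδn : 0 ≤ δ ^ (k - 1) := pow_nonneg (le_of_lt S.hδ0) _
  have : l k * δ ^ (k - 1) ≤ L k * ((M ^ (k - 1) - 1) / (M - 1)) := by
    calc l k * δ ^ (k - 1) ≤ l k * 1 := by nlinarith
    _ ≤ L k * 1 := by nlinarith
    _ ≤ L k * ((M ^ (k - 1) - 1) / (M - 1)) := by nlinarith
  apply mul_nonneg (S.hlamk k hk.1 hk.2)
  have : L k * (M ^ (k - 1) - 1) / (M - 1) = L k * ((M ^ (k - 1) - 1) / (M - 1)) := by ring
  linarith [this]

lemma l1_pos (S : Setup a b δ M n lam l L ξ) : 0 < l 1 := by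
  have hK := S.hK
  unfold KOp at hK
  have hs : 0 ≤ ∑ k ∈ Finset.Icc 2 n,
      lam k * (L k * (M ^ (k - 1) - 1) / (M - 1) - l k * δ ^ (k - 1)) :=
    Finset.sum_nonneg fun k hk => S.term_nonneg hk
  have h2 : 0 < lam 1 * l 1 := by linarith
  by_contra hl
  push_neg at hl
  nlinarith [S.hlam1]

end Setup

namespace Setup2
open Setup

variable {a b δ M : ℝ} {n : ℕ} {lam l L : ℕ → ℝ} {ξ : ℕ → ℝ → ℝ}

lemma lam_nonneg (S : Setup a b δ M n lam l L ξ) {k : ℕ} (hk : k ∈ Finset.Icc 1 n) :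
    0 ≤ lam k := by
  rw [Finset.mem_Icc] at hk
  rcases eq_or_lt_of_le hk.1 with h | h
  · exact le_of_lt (h ▸ S.hlam1)
  · exact S.hlamk k h hk.2

lemma K0_eq (S : Setup a b δ M n lam l L ξ) :
    Kzero δ n lam l = lam 1 * l 1 + ∑ k ∈ Finset.Icc 2 n, lam k * l k * δ ^ (k - 1) := by
  unfold Kzero
  rw [S.Icc1_eq, Finset.sum_insert Setup.one_not_mem]
  norm_num

lemma K1_eq (S : Setup a b δ M n lam l L ξ) :
    Kone M n lam L = lam 1 * L 1 + ∑ k ∈ Finset.Icc 2 n, lam k * L k * M ^ (k - 1) := by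
  unfold Kone
  rw [S.Icc1_eq, Finset.sum_insert Setup.one_not_mem]
  norm_num

lemma K0_pos (S : Setup a b δ M n lam l L ξ) : 0 < Kzero δ n lam l := by
  rw [K0_eq S]
  have h1 : 0 < lam 1 * l 1 := mul_pos S.hlam1 S.l1_pos
  have h2 : 0 ≤ ∑ k ∈ Finset.Icc 2 n, lam k * l k * δ ^ (k - 1) := by
    apply Finset.sum_nonneg
    intro k hk
    rw [Finset.mem_Icc] at hk
    exact mul_nonneg (mul_nonneg (S.hlamk k hk.1 hk.2) (S.hlL k (by omega) hk.2).1)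
      (pow_nonneg (le_of_lt S.hδ0) _)
  linarith

lemma K0_le_K1 (S : Setup a b δ M n lam l L ξ) : Kzero δ n lam l ≤ Kone M n lam L := by
  unfold Kzero Kone
  apply Finset.sum_le_sum
  intro k hk
  rw [Finset.mem_Icc] at hk
  have hl := S.hlL k hk.1 hk.2
  have hlamn := lam_nonneg S (Finset.mem_Icc.2 hk)
  have hδk : δ ^ (k-1) ≤ M ^ (k-1) :=
    pow_le_pow_left₀ (le_of_lt S.hδ0) (by linarith [S.hδ1, S.hM]) _
  have hδn : (0:ℝ) ≤ δ ^ (k-1) := pow_nonneg (le_of_lt S.hδ0) _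
  have hMn : (0:ℝ) ≤ M ^ (k-1) := pow_nonneg (by linarith [S.hM]) _
  have hL0 : 0 ≤ L k := le_trans hl.1 hl.2
  calc lam k * l k * δ ^ (k-1) ≤ lam k * l k * M ^ (k-1) :=
        mul_le_mul_of_nonneg_left hδk (mul_nonneg hlamn hl.1)
  _ ≤ lam k * L k * M ^ (k-1) :=
        mul_le_mul_of_nonneg_right (mul_le_mul_of_nonneg_left hl.2 hlamn) hMn

lemma K1_pos (S : Setup a b δ M n lam l L ξ) : 0 < Kone M n lam L :=
  lt_of_lt_of_le (K0_pos S) (K0_le_K1 S)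

lemma R_nonneg (S : Setup a b δ M n lam l L ξ) : 0 ≤ ROp M n lam L := by
  unfold ROp
  apply Finset.sum_nonneg
  intro k hk
  rw [Finset.mem_Icc] at hk
  have := S.gs_nonneg k
  have hL : 0 ≤ L k := le_trans (S.hlL k (by omega) hk.2).1 (S.hlL k (by omega) hk.2).2
  have : 0 ≤ L k * ((M ^ (k-1) - 1)/(M-1)) := mul_nonneg hL this
  have he : lam k * (L k * (M ^ (k-1) - 1) / (M-1)) = lam k * (L k * ((M ^ (k-1) - 1)/(M-1))) := by ring
  rw [he]
  exact mul_nonneg (S.hlamk k hk.1 hk.2) ‹0 ≤ L k * ((M ^ (k-1) - 1)/(M-1))›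

lemma K_eq (S : Setup a b δ M n lam l L ξ) :
    KOp δ M n lam l L = Kzero δ n lam l - ROp M n lam L := by
  unfold KOp ROp
  have e : ∑ k ∈ Finset.Icc 2 n, lam k * (L k * (M ^ (k - 1) - 1) / (M - 1) - l k * δ ^ (k - 1))
      = ∑ k ∈ Finset.Icc 2 n,
        (lam k * (L k * (M ^ (k - 1) - 1) / (M - 1)) - lam k * l k * δ ^ (k - 1)) :=
    Finset.sum_congr rfl (fun k _ => by ring)
  rw [K0_eq S, e, Finset.sum_sub_distrib]
  ring

lemma R_lt_K0 (S : Setup a b δ M n lam l L ξ) : ROp M n lam L < Kzero δ n lam l := by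
  have := S.hK
  have := K_eq S
  linarith

end Setup2

lemma Aclass.iterate_contOn {a b δ M : ℝ} {h : ℝ → ℝ} (hh : h ∈ Aclass a b δ M) (j : ℕ) :
    ContinuousOn h^[j] (Set.Icc a b) := by
  induction j with
  | zero => simpa using continuousOn_id
  | succ j ih =>
    rw [Function.iterate_succ']
    exact hh.1.comp ih (Aclass.iterate_mapsTo hh j)

namespace Setup2

lemma Phi_fixed_a (S : Setup a b δ M n lam l L ξ) {h : ℝ → ℝ} (hha : h a = a) :
    PhiOp n lam ξ h a = a := by
  unfold PhiOp
  have h1 : ∀ k ∈ Finset.Icc 2 n, lam k * ξ k (h^[k - 1] a) = lam k * a := by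
    intro k hk
    rw [Finset.mem_Icc] at hk
    rw [Function.iterate_fixed hha, (S.hξ k (by omega) hk.2).2.2.1]
  rw [Finset.sum_congr rfl h1, (S.hξ 1 le_rfl S.hn).2.2.1, ← Finset.sum_mul]
  have hs := S.hsum
  rw [S.Icc1_eq, Finset.sum_insert Setup.one_not_mem] at hs
  linear_combination a * hs

lemma Phi_fixed_b (S : Setup a b δ M n lam l L ξ) {h : ℝ → ℝ} (hhb : h b = b) :
    PhiOp n lam ξ h b = b := by
  unfold PhiOp
  have h1 : ∀ k ∈ Finset.Icc 2 n, lam k * ξ k (h^[k - 1] b) = lam k * b := by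
    intro k hk
    rw [Finset.mem_Icc] at hk
    rw [Function.iterate_fixed hhb, (S.hξ k (by omega) hk.2).2.2.2.1]
  rw [Finset.sum_congr rfl h1, (S.hξ 1 le_rfl S.hn).2.2.2.1, ← Finset.sum_mul]
  have hs := S.hsum
  rw [S.Icc1_eq, Finset.sum_insert Setup.one_not_mem] at hs
  linear_combination b * hs

lemma Phi_contOn (S : Setup a b δ M n lam l L ξ) {h : ℝ → ℝ} (hh : h ∈ Aclass a b δ M) :
    ContinuousOn (PhiOp n lam ξ h) (Set.Icc a b) := by
  unfold PhiOp
  apply ContinuousOn.add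
  · exact continuousOn_const.mul (S.hξ 1 le_rfl S.hn).1
  · apply continuousOn_finset_sum
    intro k hk
    rw [Finset.mem_Icc] at hk
    exact continuousOn_const.mul
      (((S.hξ k (by omega) hk.2).1.comp (Aclass.iterate_contOn hh (k-1))
        (Aclass.iterate_mapsTo hh (k-1))))

lemma Phi_slope (S : Setup a b δ M n lam l L ξ) {h : ℝ → ℝ} (hh : h ∈ Aclass a b δ M)
    {u v : ℝ} (hu : u ∈ Set.Icc a b) (hv : v ∈ Set.Icc a b) (hvu : v ≤ u) :
    Kzero δ n lam l * (u - v) ≤ PhiOp n lam ξ h u - PhiOp n lam ξ h v ∧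
      PhiOp n lam ξ h u - PhiOp n lam ξ h v ≤ Kone M n lam L * (u - v) := by
  have hδ0 := le_of_lt S.hδ0
  have hM0 : (0:ℝ) ≤ M := by linarith [S.hM]
  have hterm : ∀ k ∈ Finset.Icc 2 n,
      (lam k * l k * δ ^ (k-1) * (u - v) ≤ lam k * (ξ k (h^[k-1] u) - ξ k (h^[k-1] v)) ∧
       lam k * (ξ k (h^[k-1] u) - ξ k (h^[k-1] v)) ≤ lam k * L k * M ^ (k-1) * (u - v)) := by
    intro k hk
    rw [Finset.mem_Icc] at hk
    have hξk := S.hξ k (by omega) hk.2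
    have hlk := S.hlL k (by omega) hk.2
    have hit := Aclass.iterate_slope hh hδ0 hM0 (k-1) hu hv hvu
    have hwu := Aclass.iterate_mapsTo hh (k-1) hu
    have hwv := Aclass.iterate_mapsTo hh (k-1) hv
    have hwle : h^[k-1] v ≤ h^[k-1] u := by
      nlinarith [hit.1, mul_nonneg (pow_nonneg hδ0 (k-1)) (sub_nonneg.2 hvu)]
    have hsl := Aclass.slope hξk hwu hwv hwle
    have hlamn : 0 ≤ lam k := S.hlamk k hk.1 hk.2
    constructor
    · calc lam k * l k * δ^(k-1) * (u-v) = lam k * (l k * (δ^(k-1) * (u-v))) := by ring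
      _ ≤ lam k * (l k * (h^[k-1] u - h^[k-1] v)) :=
          mul_le_mul_of_nonneg_left (mul_le_mul_of_nonneg_left hit.1 hlk.1) hlamn
      _ ≤ lam k * (ξ k (h^[k-1] u) - ξ k (h^[k-1] v)) :=
          mul_le_mul_of_nonneg_left hsl.1 hlamn
    · have hL0 : 0 ≤ L k := le_trans hlk.1 hlk.2
      calc lam k * (ξ k (h^[k-1] u) - ξ k (h^[k-1] v))
          ≤ lam k * (L k * (h^[k-1] u - h^[k-1] v)) :=
          mul_le_mul_of_nonneg_left hsl.2 hlamn
      _ ≤ lam k * (L k * (M^(k-1) * (u-v))) :=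
          mul_le_mul_of_nonneg_left (mul_le_mul_of_nonneg_left hit.2 hL0) hlamn
      _ = lam k * L k * M^(k-1) * (u-v) := by ring
  have hξ1 := S.hξ 1 le_rfl S.hn
  have hsl1 := Aclass.slope hξ1 hu hv hvu
  have hdiff : PhiOp n lam ξ h u - PhiOp n lam ξ h v
      = lam 1 * (ξ 1 u - ξ 1 v)
        + ∑ k ∈ Finset.Icc 2 n, lam k * (ξ k (h^[k-1] u) - ξ k (h^[k-1] v)) := by
    unfold PhiOp
    rw [show (∑ k ∈ Finset.Icc 2 n, lam k * (ξ k (h^[k-1] u) - ξ k (h^[k-1] v)))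
        = ∑ k ∈ Finset.Icc 2 n, (lam k * ξ k (h^[k-1] u) - lam k * ξ k (h^[k-1] v))
      from Finset.sum_congr rfl fun k _ => by ring, Finset.sum_sub_distrib]
    ring
  constructor
  · rw [hdiff, K0_eq S]
    have s1 : lam 1 * l 1 * (u - v) ≤ lam 1 * (ξ 1 u - ξ 1 v) := by
      calc lam 1 * l 1 * (u-v) = lam 1 * (l 1 * (u-v)) := by ring
      _ ≤ lam 1 * (ξ 1 u - ξ 1 v) := mul_le_mul_of_nonneg_left hsl1.1 (le_of_lt S.hlam1)
    calc (lam 1 * l 1 + ∑ k ∈ Finset.Icc 2 n, lam k * l k * δ ^ (k-1)) * (u - v)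
        = lam 1 * l 1 * (u-v) + ∑ k ∈ Finset.Icc 2 n, lam k * l k * δ ^ (k-1) * (u-v) := by
          rw [add_mul, Finset.sum_mul]
      _ ≤ lam 1 * (ξ 1 u - ξ 1 v)
            + ∑ k ∈ Finset.Icc 2 n, lam k * (ξ k (h^[k-1] u) - ξ k (h^[k-1] v)) :=
          add_le_add s1 (Finset.sum_le_sum fun k hk => (hterm k hk).1)
  · rw [hdiff, K1_eq S]
    have s1 : lam 1 * (ξ 1 u - ξ 1 v) ≤ lam 1 * L 1 * (u - v) := by
      calc lam 1 * (ξ 1 u - ξ 1 v) ≤ lam 1 * (L 1 * (u-v)) :=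
          mul_le_mul_of_nonneg_left hsl1.2 (le_of_lt S.hlam1)
      _ = lam 1 * L 1 * (u-v) := by ring
    calc lam 1 * (ξ 1 u - ξ 1 v)
            + ∑ k ∈ Finset.Icc 2 n, lam k * (ξ k (h^[k-1] u) - ξ k (h^[k-1] v))
        ≤ lam 1 * L 1 * (u-v) + ∑ k ∈ Finset.Icc 2 n, lam k * L k * M ^ (k-1) * (u-v) :=
          add_le_add s1 (Finset.sum_le_sum fun k hk => (hterm k hk).2)
      _ = (lam 1 * L 1 + ∑ k ∈ Finset.Icc 2 n, lam k * L k * M ^ (k-1)) * (u - v) := by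
          rw [add_mul, Finset.sum_mul]

lemma Phi_mono (S : Setup a b δ M n lam l L ξ) {h : ℝ → ℝ} (hh : h ∈ Aclass a b δ M)
    {u v : ℝ} (hu : u ∈ Set.Icc a b) (hv : v ∈ Set.Icc a b) (hvu : v ≤ u) :
    PhiOp n lam ξ h v ≤ PhiOp n lam ξ h u := by
  have := (Phi_slope S hh hu hv hvu).1
  nlinarith [mul_nonneg (le_of_lt (K0_pos S)) (sub_nonneg.2 hvu)]

lemma Phi_diff (S : Setup a b δ M n lam l L ξ) {h₁ h₂ : ℝ → ℝ}
    (hh₁ : h₁ ∈ Aclass a b δ M) (hh₂ : h₂ ∈ Aclass a b δ M)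
    {u : ℝ} (hu : u ∈ Set.Icc a b) {Sd : ℝ} (hSd0 : 0 ≤ Sd)
    (hSd : ∀ t ∈ Set.Icc a b, |h₁ t - h₂ t| ≤ Sd) :
    |PhiOp n lam ξ h₁ u - PhiOp n lam ξ h₂ u| ≤ ROp M n lam L * Sd := by
  have hδ0 := le_of_lt S.hδ0
  have hM0 : (0:ℝ) ≤ M := by linarith [S.hM]
  have hdiff : PhiOp n lam ξ h₁ u - PhiOp n lam ξ h₂ u
      = ∑ k ∈ Finset.Icc 2 n, lam k * (ξ k (h₁^[k-1] u) - ξ k (h₂^[k-1] u)) := by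
    unfold PhiOp
    rw [show (∑ k ∈ Finset.Icc 2 n, lam k * (ξ k (h₁^[k-1] u) - ξ k (h₂^[k-1] u)))
        = ∑ k ∈ Finset.Icc 2 n, (lam k * ξ k (h₁^[k-1] u) - lam k * ξ k (h₂^[k-1] u))
      from Finset.sum_congr rfl fun k _ => by ring, Finset.sum_sub_distrib]
    ring
  rw [hdiff]
  calc |∑ k ∈ Finset.Icc 2 n, lam k * (ξ k (h₁^[k-1] u) - ξ k (h₂^[k-1] u))|
      ≤ ∑ k ∈ Finset.Icc 2 n, |lam k * (ξ k (h₁^[k-1] u) - ξ k (h₂^[k-1] u))| :=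
        Finset.abs_sum_le_sum_abs _ _
    _ ≤ ∑ k ∈ Finset.Icc 2 n, lam k * (L k * (M ^ (k-1) - 1) / (M - 1)) * Sd := by
        apply Finset.sum_le_sum
        intro k hk
        rw [Finset.mem_Icc] at hk
        have hξk := S.hξ k (by omega) hk.2
        have hlk := S.hlL k (by omega) hk.2
        have hwu₁ := Aclass.iterate_mapsTo hh₁ (k-1) hu
        have hwu₂ := Aclass.iterate_mapsTo hh₂ (k-1) hu
        have e1 : |ξ k (h₁^[k-1] u) - ξ k (h₂^[k-1] u)| ≤ L k * |h₁^[k-1] u - h₂^[k-1] u| :=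
          Aclass.abs_sub_le hξk hlk.1 hwu₁ hwu₂
        have e2 : |h₁^[k-1] u - h₂^[k-1] u| ≤ (∑ i ∈ Finset.range (k-1), M ^ i) * Sd :=
          Aclass.iterate_dist hh₁ hh₂ hδ0 hM0 hSd (k-1) u hu
        have hL0 : 0 ≤ L k := le_trans hlk.1 hlk.2
        have hlamn : 0 ≤ lam k := S.hlamk k hk.1 hk.2
        rw [abs_mul, abs_of_nonneg hlamn]
        calc lam k * |ξ k (h₁^[k-1] u) - ξ k (h₂^[k-1] u)|
            ≤ lam k * (L k * ((∑ i ∈ Finset.range (k-1), M ^ i) * Sd)) := by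
              apply mul_le_mul_of_nonneg_left _ hlamn
              calc |ξ k (h₁^[k-1] u) - ξ k (h₂^[k-1] u)|
                  ≤ L k * |h₁^[k-1] u - h₂^[k-1] u| := e1
                _ ≤ L k * ((∑ i ∈ Finset.range (k-1), M ^ i) * Sd) :=
                  mul_le_mul_of_nonneg_left e2 hL0
          _ = lam k * (L k * ((M ^ (k-1) - 1) / (M - 1)) * Sd) := by
              rw [← S.gs_eq k]; ring
          _ = lam k * (L k * (M ^ (k-1) - 1) / (M - 1)) * Sd := by ring
    _ = ROp M n lam L * Sd := by rw [ROp, Finset.sum_mul]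

lemma key_estimate (S : Setup a b δ M n lam l L ξ) {h₁ h₂ : ℝ → ℝ}
    (hh₁ : h₁ ∈ Aclass a b δ M) (hh₂ : h₂ ∈ Aclass a b δ M)
    {u₁ u₂ : ℝ} (hu₁ : u₁ ∈ Set.Icc a b) (hu₂ : u₂ ∈ Set.Icc a b)
    {Sd : ℝ} (hSd0 : 0 ≤ Sd) (hSd : ∀ t ∈ Set.Icc a b, |h₁ t - h₂ t| ≤ Sd)
    {e : ℝ} (he : |PhiOp n lam ξ h₁ u₁ - PhiOp n lam ξ h₂ u₂| ≤ e) :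
    Kzero δ n lam l * |u₁ - u₂| ≤ e + ROp M n lam L * Sd := by
  have main : ∀ f₁ f₂ : ℝ → ℝ, f₁ ∈ Aclass a b δ M → f₂ ∈ Aclass a b δ M →
      (∀ t ∈ Set.Icc a b, |f₁ t - f₂ t| ≤ Sd) →
      ∀ w₁ w₂ : ℝ, w₁ ∈ Set.Icc a b → w₂ ∈ Set.Icc a b → w₂ ≤ w₁ →
      |PhiOp n lam ξ f₁ w₁ - PhiOp n lam ξ f₂ w₂| ≤ e →
      Kzero δ n lam l * (w₁ - w₂) ≤ e + ROp M n lam L * Sd := by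
    intro f₁ f₂ hf₁ hf₂ hfd w₁ w₂ hw₁ hw₂ hw he'
    have e1 : Kzero δ n lam l * (w₁ - w₂) ≤ PhiOp n lam ξ f₁ w₁ - PhiOp n lam ξ f₁ w₂ :=
      (Phi_slope S hf₁ hw₁ hw₂ hw).1
    have e2 : PhiOp n lam ξ f₁ w₁ - PhiOp n lam ξ f₂ w₂ ≤ e := le_trans (le_abs_self _) he'
    have e3 : PhiOp n lam ξ f₂ w₂ - PhiOp n lam ξ f₁ w₂ ≤ ROp M n lam L * Sd := by
      have := Phi_diff S hf₂ hf₁ hw₂ hSd0 (fun t ht => by rw [abs_sub_comm]; exact hfd t ht)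
      linarith [le_abs_self (PhiOp n lam ξ f₂ w₂ - PhiOp n lam ξ f₁ w₂), this]
    linarith
  rcases le_total u₂ u₁ with hle | hle
  · rw [abs_of_nonneg (sub_nonneg.2 hle)]
    exact main h₁ h₂ hh₁ hh₂ hSd u₁ u₂ hu₁ hu₂ hle he
  · rw [abs_of_nonpos (sub_nonpos.2 hle), neg_sub]
    exact main h₂ h₁ hh₂ hh₁ (fun t ht => by rw [abs_sub_comm]; exact hSd t ht)
      u₂ u₁ hu₂ hu₁ hle (by rw [abs_sub_comm]; exact he)

end Setup2

open Classical in
/-- The operator `T`: `T h (t)` is the solution `u` of `Φ_h(u) = γ t`. -/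
noncomputable def TOp (n : ℕ) (lam : ℕ → ℝ) (ξ : ℕ → ℝ → ℝ) (a b : ℝ)
    (h γ : ℝ → ℝ) (t : ℝ) : ℝ :=
  if hex : ∃ x ∈ Set.Icc a b, PhiOp n lam ξ h x = γ t then hex.choose else t

namespace Setup2

lemma Phi_inj (S : Setup a b δ M n lam l L ξ) {h : ℝ → ℝ} (hh : h ∈ Aclass a b δ M)
    {x x' : ℝ} (hx : x ∈ Set.Icc a b) (hx' : x' ∈ Set.Icc a b)
    (hxx : PhiOp n lam ξ h x = PhiOp n lam ξ h x') : x = x' := by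
  rcases le_total x x' with hle | hle
  · have := (Phi_slope S hh hx' hx hle).1
    nlinarith [K0_pos S]
  · have := (Phi_slope S hh hx hx' hle).1
    nlinarith [K0_pos S]

lemma TOp_spec (S : Setup a b δ M n lam l L ξ) {γ : ℝ → ℝ}
    (hγmem : Set.MapsTo γ (Set.Icc a b) (Set.Icc a b))
    {h : ℝ → ℝ} (hh : h ∈ Aclass a b δ M) {t : ℝ} (ht : t ∈ Set.Icc a b) :
    TOp n lam ξ a b h γ t ∈ Set.Icc a b ∧
      PhiOp n lam ξ h (TOp n lam ξ a b h γ t) = γ t := by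
  have hex : ∃ x ∈ Set.Icc a b, PhiOp n lam ξ h x = γ t := by
    have hsub := intermediate_value_Icc S.hab (Phi_contOn S hh)
    rw [Phi_fixed_a S hh.2.2.1, Phi_fixed_b S hh.2.2.2.1] at hsub
    obtain ⟨x, hx, hxe⟩ := hsub (hγmem ht)
    exact ⟨x, hx, hxe⟩
  rw [TOp, dif_pos hex]
  exact hex.choose_spec

lemma TOp_slope (S : Setup a b δ M n lam l L ξ) {γ : ℝ → ℝ}
    (hγ : γ ∈ Aclass a b (Kone M n lam L * δ) (Kzero δ n lam l * M))
    {h : ℝ → ℝ} (hh : h ∈ Aclass a b δ M)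
    {s t : ℝ} (hs : s ∈ Set.Icc a b) (ht : t ∈ Set.Icc a b) (hst : s ≤ t) :
    δ * (t - s) ≤ TOp n lam ξ a b h γ t - TOp n lam ξ a b h γ s ∧
      TOp n lam ξ a b h γ t - TOp n lam ξ a b h γ s ≤ M * (t - s) := by
  obtain ⟨hu₂, he₂⟩ := TOp_spec S hγ.2.1 hh hs
  obtain ⟨hu₁, he₁⟩ := TOp_spec S hγ.2.1 hh ht
  set u := TOp n lam ξ a b h γ t
  set v := TOp n lam ξ a b h γ s
  have hγs := Aclass.slope hγ ht hs hst
  have hK0 := K0_pos S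
  have hK1 := K1_pos S
  have hγmono : γ s ≤ γ t := by
    nlinarith [hγs.1, mul_nonneg (mul_nonneg (le_of_lt hK1) (le_of_lt S.hδ0))
      (sub_nonneg.2 hst)]
  have hvu : v ≤ u := by
    by_contra hlt
    push_neg at hlt
    have := (Phi_slope S hh hu₂ hu₁ (le_of_lt hlt)).1
    rw [he₁, he₂] at this
    nlinarith
  have h1 := (Phi_slope S hh hu₁ hu₂ hvu).1
  have h2 := (Phi_slope S hh hu₁ hu₂ hvu).2
  rw [he₁, he₂] at h1 h2
  constructor
  · -- Kone * δ * (t-s) ≤ γ t - γ s ≤ Kone * (u - v)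
    have := hγs.1
    nlinarith
  · -- Kzero * (u-v) ≤ γ t - γ s ≤ Kzero * M * (t-s)
    have := hγs.2
    nlinarith

lemma TOp_mem_Aclass (S : Setup a b δ M n lam l L ξ) {γ : ℝ → ℝ}
    (hγ : γ ∈ Aclass a b (Kone M n lam L * δ) (Kzero δ n lam l * M))
    {h : ℝ → ℝ} (hh : h ∈ Aclass a b δ M) :
    TOp n lam ξ a b h γ ∈ Aclass a b δ M := by
  have hmem : ∀ t ∈ Set.Icc a b, TOp n lam ξ a b h γ t ∈ Set.Icc a b :=
    fun t ht => (TOp_spec S hγ.2.1 hh ht).1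
  have hslope := fun {s t : ℝ} hs ht hst => TOp_slope S hγ hh (s := s) (t := t) hs ht hst
  have ha : a ∈ Set.Icc a b := Set.left_mem_Icc.2 S.hab
  have hb : b ∈ Set.Icc a b := Set.right_mem_Icc.2 S.hab
  have hTa : TOp n lam ξ a b h γ a = a := by
    apply Phi_inj S hh (hmem a ha) ha
    rw [(TOp_spec S hγ.2.1 hh ha).2, hγ.2.2.1, Phi_fixed_a S hh.2.2.1]
  have hTb : TOp n lam ξ a b h γ b = b := by
    apply Phi_inj S hh (hmem b hb) hb
    rw [(TOp_spec S hγ.2.1 hh hb).2, hγ.2.2.2.1, Phi_fixed_b S hh.2.2.2.1]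
  have hM0 : (0:ℝ) ≤ M := by linarith [S.hM]
  have hlip : LipschitzOnWith (Real.toNNReal M) (TOp n lam ξ a b h γ) (Set.Icc a b) := by
    rw [lipschitzOnWith_iff_dist_le_mul]
    intro x hx y hy
    rw [Real.dist_eq, Real.dist_eq, Real.coe_toNNReal M hM0]
    rcases le_total y x with hle | hle
    · have h1 := hslope hy hx hle
      rw [abs_of_nonneg (by nlinarith [mul_nonneg (le_of_lt S.hδ0) (sub_nonneg.2 hle), h1.1]),
        abs_of_nonneg (sub_nonneg.2 hle)]
      exact h1.2
    · have h1 := hslope hx hy hle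
      rw [abs_sub_comm, abs_sub_comm x y,
        abs_of_nonneg (by nlinarith [mul_nonneg (le_of_lt S.hδ0) (sub_nonneg.2 hle), h1.1]),
        abs_of_nonneg (sub_nonneg.2 hle)]
      exact h1.2
  exact ⟨hlip.continuousOn, hmem, hTa, hTb,
    fun x hx y hy hyx => hslope hy hx hyx⟩

/-- The sum in the functional equation is `Φ_h` evaluated at `h t`. -/
lemma sum_eq_Phi (S : Setup a b δ M n lam l L ξ) (h : ℝ → ℝ) (t : ℝ) :
    ∑ k ∈ Finset.Icc 1 n, lam k * ξ k (h^[k] t) = PhiOp n lam ξ h (h t) := by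
  unfold PhiOp
  rw [S.Icc1_eq, Finset.sum_insert Setup.one_not_mem, Function.iterate_one]
  congr 1
  apply Finset.sum_congr rfl
  intro k hk
  rw [Finset.mem_Icc] at hk
  have hit : h^[k] t = h^[k-1] (h t) := by
    obtain ⟨m, rfl⟩ : ∃ m, k = m + 1 := ⟨k - 1, by omega⟩
    simp [Function.iterate_succ_apply]
  rw [hit]

/-- Stability/uniqueness estimate for the additive equation. -/
lemma additive_stability (S : Setup a b δ M n lam l L ξ) {h h₁ γ γ₁ : ℝ → ℝ}
    (hh : h ∈ Aclass a b δ M) (hh₁ : h₁ ∈ Aclass a b δ M)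
    (heq : ∀ t ∈ Set.Icc a b, ∑ k ∈ Finset.Icc 1 n, lam k * ξ k (h^[k] t) = γ t)
    (heq₁ : ∀ t ∈ Set.Icc a b, ∑ k ∈ Finset.Icc 1 n, lam k * ξ k (h₁^[k] t) = γ₁ t)
    {ε : ℝ} (hε : 0 ≤ ε) (hγd : ∀ t ∈ Set.Icc a b, |γ t - γ₁ t| ≤ ε) :
    ∀ t ∈ Set.Icc a b, |h t - h₁ t| ≤ ε / KOp δ M n lam l L := by
  have hKpos := S.hK
  have hK0 := K0_pos S
  have hcont : ContinuousOn (fun t => |h t - h₁ t|) (Set.Icc a b) :=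
    (hh.1.sub hh₁.1).abs
  obtain ⟨t₀, ht₀, hmax⟩ := isCompact_Icc.exists_isMaxOn
    (Set.nonempty_Icc.2 S.hab) hcont
  have hmax' : ∀ t ∈ Set.Icc a b, |h t - h₁ t| ≤ |h t₀ - h₁ t₀| := hmax
  have hSd0 : 0 ≤ |h t₀ - h₁ t₀| := abs_nonneg _
  have he : |PhiOp n lam ξ h (h t₀) - PhiOp n lam ξ h₁ (h₁ t₀)| ≤ ε := by
    rw [← sum_eq_Phi S h t₀, ← sum_eq_Phi S h₁ t₀, heq t₀ ht₀, heq₁ t₀ ht₀]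
    exact hγd t₀ ht₀
  have hkey := key_estimate S hh hh₁ (hh.2.1 ht₀) (hh₁.2.1 ht₀) hSd0 hmax' he
  have hKeq := K_eq S
  have hS : KOp δ M n lam l L * |h t₀ - h₁ t₀| ≤ ε := by nlinarith
  intro t ht
  calc |h t - h₁ t| ≤ |h t₀ - h₁ t₀| := hmax' t ht
  _ ≤ ε / KOp δ M n lam l L := by
      rw [le_div_iff₀ hKpos]; nlinarith

end Setup2

namespace Setup2

/-- The class inside the space of continuous maps on `Icc a b`. -/
def Cclass (a b δ M : ℝ) (hab : a ≤ b) : Set C(↥(Set.Icc a b), ℝ) :=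
  {f | (∀ t, f t ∈ Set.Icc a b) ∧ f ⟨a, Set.left_mem_Icc.2 hab⟩ = a ∧
    f ⟨b, Set.right_mem_Icc.2 hab⟩ = b ∧
    ∀ s t : ↥(Set.Icc a b), (s : ℝ) ≤ (t : ℝ) →
      δ * ((t : ℝ) - (s : ℝ)) ≤ f t - f s ∧ f t - f s ≤ M * ((t : ℝ) - (s : ℝ))}

lemma Cclass_closed {a b δ M : ℝ} (hab : a ≤ b) : IsClosed (Cclass a b δ M hab) := by
  have h1 : IsClosed {f : C(↥(Set.Icc a b), ℝ) | ∀ t, f t ∈ Set.Icc a b} := by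
    rw [Set.setOf_forall]
    exact isClosed_iInter fun t =>
      isClosed_Icc.preimage (continuous_eval_const t)
  have h2 : IsClosed {f : C(↥(Set.Icc a b), ℝ) | f ⟨a, Set.left_mem_Icc.2 hab⟩ = a} :=
    isClosed_eq (continuous_eval_const _) continuous_const
  have h3 : IsClosed {f : C(↥(Set.Icc a b), ℝ) | f ⟨b, Set.right_mem_Icc.2 hab⟩ = b} :=
    isClosed_eq (continuous_eval_const _) continuous_const
  have h4 : IsClosed {f : C(↥(Set.Icc a b), ℝ) |
      ∀ s t : ↥(Set.Icc a b), (s : ℝ) ≤ (t : ℝ) →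
        δ * ((t : ℝ) - (s : ℝ)) ≤ f t - f s ∧ f t - f s ≤ M * ((t : ℝ) - (s : ℝ))} := by
    rw [Set.setOf_forall]
    apply isClosed_iInter
    intro s
    rw [Set.setOf_forall]
    apply isClosed_iInter
    intro t
    by_cases hst : (s : ℝ) ≤ (t : ℝ)
    · have : {f : C(↥(Set.Icc a b), ℝ) | (s : ℝ) ≤ (t : ℝ) →
          δ * ((t : ℝ) - (s : ℝ)) ≤ f t - f s ∧ f t - f s ≤ M * ((t : ℝ) - (s : ℝ))}
          = {f : C(↥(Set.Icc a b), ℝ) | δ * ((t : ℝ) - (s : ℝ)) ≤ f t - f s}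
            ∩ {f | f t - f s ≤ M * ((t : ℝ) - (s : ℝ))} := by
        ext f; simp [hst, Set.mem_setOf_eq, Set.mem_inter_iff]
      rw [this]
      exact (isClosed_le continuous_const
          ((continuous_eval_const t).sub
            (continuous_eval_const s))).inter
        (isClosed_le ((continuous_eval_const t).sub
            (continuous_eval_const s)) continuous_const)
    · have : {f : C(↥(Set.Icc a b), ℝ) | (s : ℝ) ≤ (t : ℝ) →
          δ * ((t : ℝ) - (s : ℝ)) ≤ f t - f s ∧ f t - f s ≤ M * ((t : ℝ) - (s : ℝ))}
          = Set.univ := by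
        ext f; simp [hst]
      rw [this]; exact isClosed_univ
  have he : Cclass a b δ M hab =
      ({f : C(↥(Set.Icc a b), ℝ) | ∀ t, f t ∈ Set.Icc a b} ∩
        {f | f ⟨a, Set.left_mem_Icc.2 hab⟩ = a}) ∩
      ({f | f ⟨b, Set.right_mem_Icc.2 hab⟩ = b} ∩
        {f | ∀ s t : ↥(Set.Icc a b), (s : ℝ) ≤ (t : ℝ) →
          δ * ((t : ℝ) - (s : ℝ)) ≤ f t - f s ∧ f t - f s ≤ M * ((t : ℝ) - (s : ℝ))}) := by
    ext f
    simp only [Cclass, Set.mem_setOf_eq, Set.mem_inter_iff]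
    tauto
  rw [he]
  exact (h1.inter h2).inter (h3.inter h4)

lemma Aclass_of_Cclass {a b δ M : ℝ} {hab : a ≤ b} {f : C(↥(Set.Icc a b), ℝ)}
    (hf : f ∈ Cclass a b δ M hab) : Set.IccExtend hab ⇑f ∈ Aclass a b δ M := by
  obtain ⟨h1, h2, h3, h4⟩ := hf
  refine ⟨(f.continuous.Icc_extend').continuousOn, ?_, ?_, ?_, ?_⟩
  · intro x hx
    rw [Set.IccExtend_of_mem hab _ hx]
    exact h1 _
  · rw [Set.IccExtend_left]; exact h2
  · rw [Set.IccExtend_right]; exact h3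
  · intro x hx y hy hyx
    rw [Set.IccExtend_of_mem hab _ hx, Set.IccExtend_of_mem hab _ hy]
    exact h4 ⟨y, hy⟩ ⟨x, hx⟩ hyx

lemma Cclass_nonempty {a b δ M : ℝ} (hab : a ≤ b) (hδ1 : δ ≤ 1) (hM1 : 1 ≤ M) :
    (Cclass a b δ M hab).Nonempty := by
  refine ⟨⟨fun t => (t : ℝ), continuous_subtype_val⟩, fun t => t.2, rfl, rfl, ?_⟩
  intro s t hst
  simp only [ContinuousMap.coe_mk]
  constructor
  · nlinarith
  · nlinarith

variable {a b δ M : ℝ} {n : ℕ} {lam l L : ℕ → ℝ} {ξ : ℕ → ℝ → ℝ}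

/-- The operator `T` as a self-map of the subtype `Cclass`. -/
noncomputable def Tc (S : Setup a b δ M n lam l L ξ) {γ : ℝ → ℝ}
    (hγ : γ ∈ Aclass a b (Kone M n lam L * δ) (Kzero δ n lam l * M))
    (f : ↥(Cclass a b δ M S.hab)) : ↥(Cclass a b δ M S.hab) := by
  refine ⟨⟨fun t => TOp n lam ξ a b (Set.IccExtend S.hab ⇑(f : C(↥(Set.Icc a b), ℝ))) γ ↑t,
    ?_⟩, ?_, ?_, ?_, ?_⟩
  · have hT := TOp_mem_Aclass S hγ (Aclass_of_Cclass f.2)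
    exact ContinuousOn.restrict hT.1
  · intro t
    exact (TOp_mem_Aclass S hγ (Aclass_of_Cclass f.2)).2.1 t.2
  · exact (TOp_mem_Aclass S hγ (Aclass_of_Cclass f.2)).2.2.1
  · exact (TOp_mem_Aclass S hγ (Aclass_of_Cclass f.2)).2.2.2.1
  · intro s t hst
    exact (TOp_mem_Aclass S hγ (Aclass_of_Cclass f.2)).2.2.2.2 ↑t t.2 ↑s s.2 hst

lemma Tc_contracting (S : Setup a b δ M n lam l L ξ) {γ : ℝ → ℝ}
    (hγ : γ ∈ Aclass a b (Kone M n lam L * δ) (Kzero δ n lam l * M)) :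
    ContractingWith (Real.toNNReal (ROp M n lam L / Kzero δ n lam l)) (Tc S hγ) := by
  have hK0 := K0_pos S
  have hRK := R_lt_K0 S
  have hR0 := R_nonneg S
  have hr0 : 0 ≤ ROp M n lam L / Kzero δ n lam l := div_nonneg hR0 (le_of_lt hK0)
  constructor
  · rw [← Real.toNNReal_one]
    exact (Real.toNNReal_lt_toNNReal_iff one_pos).2 (by
      rw [div_lt_one hK0]; exact hRK)
  · apply LipschitzWith.of_dist_le_mul
    intro f g
    rw [Subtype.dist_eq, Subtype.dist_eq f g, Real.coe_toNNReal _ hr0]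
    have hd0 : 0 ≤ ROp M n lam L / Kzero δ n lam l * dist (f : C(↥(Set.Icc a b), ℝ)) ↑g :=
      mul_nonneg hr0 dist_nonneg
    rw [ContinuousMap.dist_le hd0]
    intro t
    set h₁ := Set.IccExtend S.hab ⇑(f : C(↥(Set.Icc a b), ℝ))
    set h₂ := Set.IccExtend S.hab ⇑(g : C(↥(Set.Icc a b), ℝ))
    have hh₁ : h₁ ∈ Aclass a b δ M := Aclass_of_Cclass f.2
    have hh₂ : h₂ ∈ Aclass a b δ M := Aclass_of_Cclass g.2
    have hSd : ∀ s ∈ Set.Icc a b, |h₁ s - h₂ s| ≤ dist (f : C(↥(Set.Icc a b), ℝ)) ↑g := by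
      intro s hs
      have : |h₁ s - h₂ s| = dist ((f : C(↥(Set.Icc a b), ℝ)) ⟨s, hs⟩)
          ((g : C(↥(Set.Icc a b), ℝ)) ⟨s, hs⟩) := by
        show |Set.IccExtend S.hab (⇑(f : C(↥(Set.Icc a b), ℝ))) s
            - Set.IccExtend S.hab (⇑(g : C(↥(Set.Icc a b), ℝ))) s| = _
        rw [Real.dist_eq, Set.IccExtend_of_mem S.hab _ hs, Set.IccExtend_of_mem S.hab _ hs]
      rw [this]
      exact ContinuousMap.dist_apply_le_dist _
    obtain ⟨hu₁, he₁⟩ := TOp_spec S hγ.2.1 hh₁ t.2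
    obtain ⟨hu₂, he₂⟩ := TOp_spec S hγ.2.1 hh₂ t.2
    have he : |PhiOp n lam ξ h₁ (TOp n lam ξ a b h₁ γ ↑t)
        - PhiOp n lam ξ h₂ (TOp n lam ξ a b h₂ γ ↑t)| ≤ 0 := by
      rw [he₁, he₂, sub_self, abs_zero]
    have hkey := key_estimate S hh₁ hh₂ hu₁ hu₂ dist_nonneg hSd he
    show dist (TOp n lam ξ a b h₁ γ ↑t) (TOp n lam ξ a b h₂ γ ↑t) ≤ _
    rw [Real.dist_eq]
    rw [div_mul_eq_mul_div, le_div_iff₀ hK0]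
    nlinarith [hkey]

/-- Existence for the additive equation. -/
theorem additive_exists (S : Setup a b δ M n lam l L ξ) {γ : ℝ → ℝ}
    (hγ : γ ∈ Aclass a b (Kone M n lam L * δ) (Kzero δ n lam l * M)) :
    ∃ h ∈ Aclass a b δ M,
      ∀ t ∈ Set.Icc a b, ∑ k ∈ Finset.Icc 1 n, lam k * ξ k (h^[k] t) = γ t := by
  haveI : Nonempty ↥(Cclass a b δ M S.hab) :=
    (Cclass_nonempty S.hab (le_of_lt S.hδ1) (le_of_lt S.hM)).to_subtype
  haveI : CompleteSpace ↥(Cclass a b δ M S.hab) :=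
    (Cclass_closed S.hab).completeSpace_coe
  have hcontr := Tc_contracting S hγ
  set f := hcontr.fixedPoint (Tc S hγ)
  have hfix : Tc S hγ f = f := hcontr.fixedPoint_isFixedPt
  set h := Set.IccExtend S.hab ⇑(f : C(↥(Set.Icc a b), ℝ)) with hh_def
  have hhA : h ∈ Aclass a b δ M := Aclass_of_Cclass f.2
  refine ⟨h, hhA, ?_⟩
  intro t ht
  have hval : TOp n lam ξ a b h γ t = h t := by
    have := congrArg (fun u : ↥(Cclass a b δ M S.hab) =>
      (u : C(↥(Set.Icc a b), ℝ)) ⟨t, ht⟩) hfix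
    simp only [Tc, ContinuousMap.coe_mk] at this
    rw [hh_def, Set.IccExtend_of_mem S.hab _ ht]
    exact this
  rw [sum_eq_Phi S h t, ← hval]
  exact (TOp_spec S hγ.2.1 hhA ht).2

end Setup2

section Wrap

open Real

lemma exp_mapsTo {c d : ℝ} (hc : 0 < c) (hd : 0 < d) :
    ∀ t ∈ Set.Icc (Real.log c) (Real.log d), Real.exp t ∈ Set.Icc c d := by
  intro t ht
  constructor
  · rw [← Real.exp_log hc]; exact Real.exp_le_exp.2 ht.1
  · rw [← Real.exp_log hd]; exact Real.exp_le_exp.2 ht.2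

lemma log_mapsTo {c d : ℝ} (hc : 0 < c) :
    ∀ x ∈ Set.Icc c d, Real.log x ∈ Set.Icc (Real.log c) (Real.log d) := by
  intro x hx
  exact ⟨Real.log_le_log hc hx.1, Real.log_le_log (lt_of_lt_of_le hc hx.1) hx.2⟩

lemma Aclass_of_Gclass {c d A B : ℝ} (hc : 0 < c) (hcd : c ≤ d) {g : ℝ → ℝ}
    (hg : g ∈ Gclass c d A B) :
    (fun t => Real.log (g (Real.exp t))) ∈ Aclass (Real.log c) (Real.log d) A B := by
  have hd : 0 < d := lt_of_lt_of_le hc hcd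
  have hmt := exp_mapsTo hc hd
  have hgpos : ∀ x ∈ Set.Icc c d, 0 < g x := fun x hx => lt_of_lt_of_le hc (hg.2.1 hx).1
  refine ⟨?_, ?_, ?_, ?_, ?_⟩
  · exact (hg.1.comp Real.continuous_exp.continuousOn hmt).log
      (fun t ht => ne_of_gt (hgpos _ (hmt t ht)))
  · intro t ht
    have hx := hmt t ht
    exact ⟨Real.log_le_log hc (hg.2.1 hx).1, Real.log_le_log (hgpos _ hx) (hg.2.1 hx).2⟩
  · simp only [Real.exp_log hc, hg.2.2.1]
  · simp only [Real.exp_log hd, hg.2.2.2.1]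
  · intro x hx y hy hyx
    have hu := hmt x hx
    have hv := hmt y hy
    have huv : Real.exp y ≤ Real.exp x := Real.exp_le_exp.2 hyx
    have hr := hg.2.2.2.2 (Real.exp x) hu (Real.exp y) hv huv
    have hpos : 0 < Real.exp x / Real.exp y := div_pos (Real.exp_pos _) (Real.exp_pos _)
    have hgu := hgpos _ hu
    have hgv := hgpos _ hv
    have hratio : 0 < g (Real.exp x) / g (Real.exp y) := div_pos hgu hgv
    have hlogr : Real.log (Real.exp x / Real.exp y) = x - y := by
      rw [← Real.exp_sub, Real.log_exp]
    constructor
    · have := Real.log_le_log (Real.rpow_pos_of_pos hpos A) hr.1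
      rwa [Real.log_rpow hpos, hlogr,
        Real.log_div (ne_of_gt hgu) (ne_of_gt hgv)] at this
    · have := Real.log_le_log hratio hr.2
      rwa [Real.log_rpow hpos, hlogr,
        Real.log_div (ne_of_gt hgu) (ne_of_gt hgv)] at this

lemma Gclass_of_Aclass {c d δ M : ℝ} (hc : 0 < c) (hcd : c ≤ d) {h : ℝ → ℝ}
    (hh : h ∈ Aclass (Real.log c) (Real.log d) δ M) :
    (fun x => Real.exp (h (Real.log x))) ∈ Gclass c d δ M := by
  have hd : 0 < d := lt_of_lt_of_le hc hcd
  have hlt := log_mapsTo (d := d) hc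
  have hmt := exp_mapsTo hc hd
  refine ⟨?_, ?_, ?_, ?_, ?_⟩
  · apply Real.continuous_exp.comp_continuousOn
    apply hh.1.comp _ hlt
    exact Real.continuousOn_log.mono (fun x hx => ne_of_gt (lt_of_lt_of_le hc hx.1))
  · intro x hx
    exact hmt _ (hh.2.1 (hlt x hx))
  · simp only [hh.2.2.1, Real.exp_log hc]
  · simp only [hh.2.2.2.1, Real.exp_log hd]
  · intro x hx y hy hyx
    have hx0 : 0 < x := lt_of_lt_of_le hc hx.1
    have hy0 : 0 < y := lt_of_lt_of_le hc hy.1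
    have hl : Real.log y ≤ Real.log x := Real.log_le_log hy0 hyx
    have hsl := hh.2.2.2.2 _ (hlt x hx) _ (hlt y hy) hl
    have hdive : (fun x => Real.exp (h (Real.log x))) x / (fun x => Real.exp (h (Real.log x))) y
        = Real.exp (h (Real.log x) - h (Real.log y)) := by
      simp only [Real.exp_sub]
    have hxy0 : 0 < x / y := div_pos hx0 hy0
    have hlxy : Real.log (x / y) = Real.log x - Real.log y :=
      Real.log_div (ne_of_gt hx0) (ne_of_gt hy0)
    constructor
    · rw [hdive, Real.rpow_def_of_pos hxy0, Real.exp_le_exp, hlxy, mul_comm]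
      exact hsl.1
    · rw [hdive, Real.rpow_def_of_pos hxy0, Real.exp_le_exp, hlxy, mul_comm]
      exact hsl.2

lemma g_iterate (h : ℝ → ℝ) (k : ℕ) {x : ℝ} (hx : 0 < x) :
    (fun x => Real.exp (h (Real.log x)))^[k] x = Real.exp (h^[k] (Real.log x)) := by
  induction k with
  | zero => simp [Real.exp_log hx]
  | succ k ih =>
    rw [Function.iterate_succ_apply', ih, Function.iterate_succ_apply']
    simp [Real.log_exp]

lemma g'_iterate {c d : ℝ} (hc : 0 < c) {g' : ℝ → ℝ}
    (hmap : Set.MapsTo g' (Set.Icc c d) (Set.Icc c d)) (k : ℕ) {t : ℝ}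
    (ht : Real.exp t ∈ Set.Icc c d) :
    (fun s => Real.log (g' (Real.exp s)))^[k] t = Real.log (g'^[k] (Real.exp t)) := by
  induction k with
  | zero => simp [Real.log_exp]
  | succ k ih =>
    have hk : g'^[k] (Real.exp t) ∈ Set.Icc c d := hmap.iterate k ht
    have hk0 : 0 < g'^[k] (Real.exp t) := lt_of_lt_of_le hc hk.1
    rw [Function.iterate_succ_apply', ih, Real.exp_log hk0,
      Function.iterate_succ_apply']

lemma log_abs_sub {c : ℝ} (hc : 0 < c) {u v : ℝ} (hu : c ≤ u) (hv : c ≤ v) :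
    |Real.log u - Real.log v| ≤ |u - v| / c := by
  have key : ∀ w z : ℝ, c ≤ w → c ≤ z → z ≤ w → Real.log w - Real.log z ≤ (w - z) / c := by
    intro w z hw hz hzw
    have hz0 : 0 < z := lt_of_lt_of_le hc hz
    have hw0 : 0 < w := lt_of_lt_of_le hc hw
    calc Real.log w - Real.log z = Real.log (w / z) :=
        (Real.log_div (ne_of_gt hw0) (ne_of_gt hz0)).symm
    _ ≤ w / z - 1 := Real.log_le_sub_one_of_pos (div_pos hw0 hz0)
    _ = (w - z) / z := by field_simp
    _ ≤ (w - z) / c := div_le_div_of_nonneg_left (by linarith) hc hz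
  rcases le_total v u with hle | hle
  · have h1 : Real.log v ≤ Real.log u := Real.log_le_log (lt_of_lt_of_le hc hv) hle
    rw [abs_of_nonneg (sub_nonneg.2 h1), abs_of_nonneg (sub_nonneg.2 hle)]
    exact key u v hu hv hle
  · have h1 : Real.log u ≤ Real.log v := Real.log_le_log (lt_of_lt_of_le hc hu) hle
    rw [abs_sub_comm, abs_sub_comm u v, abs_of_nonneg (sub_nonneg.2 h1),
      abs_of_nonneg (sub_nonneg.2 hle)]
    exact key v u hv hu hle

lemma exp_abs_sub {d : ℝ} (hd : 0 < d) {s s' : ℝ} (hs : s ≤ Real.log d)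
    (hs' : s' ≤ Real.log d) : |Real.exp s - Real.exp s'| ≤ d * |s - s'| := by
  have key : ∀ w z : ℝ, w ≤ Real.log d → z ≤ w → Real.exp w - Real.exp z ≤ d * (w - z) := by
    intro w z hw hzw
    have h1 : Real.exp w ≤ d := by rw [← Real.exp_log hd]; exact Real.exp_le_exp.2 hw
    have h2 := Real.add_one_le_exp (z - w)
    have h3 : Real.exp w * Real.exp (z - w) = Real.exp z := by
      rw [← Real.exp_add]; ring_nf
    nlinarith [Real.exp_pos w, Real.exp_pos z, sub_nonneg.2 hzw,
      mul_le_mul_of_nonneg_right h1 (sub_nonneg.2 hzw),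
      mul_le_mul_of_nonneg_left h2 (le_of_lt (Real.exp_pos w))]
  rcases le_total s' s with hle | hle
  · have h1 : Real.exp s' ≤ Real.exp s := Real.exp_le_exp.2 hle
    rw [abs_of_nonneg (sub_nonneg.2 h1), abs_of_nonneg (sub_nonneg.2 hle)]
    exact key s s' hs hle
  · have h1 : Real.exp s ≤ Real.exp s' := Real.exp_le_exp.2 hle
    rw [abs_sub_comm, abs_sub_comm s s', abs_of_nonneg (sub_nonneg.2 h1),
      abs_of_nonneg (sub_nonneg.2 hle)]
    exact key s' s hs' hle

end Wrap

/-- existence, uniqueness and Lipschitz stability of the solution of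
∏_{k=1}^n (Ξ_k(g^k(x)))^{λ_k} = G(x) in 𝒢(J;δ,M). -/
theorem stmt_3 (c d δ M : ℝ) (n : ℕ) (hn : 1 ≤ n) (hc : 0 < c) (hcd : c < d)
    (hδ0 : 0 < δ) (hδ1 : δ < 1) (hM : 1 < M)
    (lam l L : ℕ → ℝ) (Ξ : ℕ → ℝ → ℝ) (G : ℝ → ℝ)
    (hlam1 : 0 < lam 1) (hlam1' : lam 1 < 1)
    (hlamk : ∀ k, 2 ≤ k → k ≤ n → 0 ≤ lam k)
    (hsum : ∑ k ∈ Finset.Icc 1 n, lam k = 1)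
    (hlL : ∀ k, 1 ≤ k → k ≤ n → 0 ≤ l k ∧ l k ≤ L k)
    (hΞ : ∀ k, 1 ≤ k → k ≤ n → Ξ k ∈ Gclass c d (l k) (L k))
    (hK : 0 < lam 1 * l 1 -
      ∑ k ∈ Finset.Icc 2 n, lam k * (L k * (M ^ (k - 1) - 1) / (M - 1) - l k * δ ^ (k - 1)))
    (hG : G ∈ Gclass c d ((∑ k ∈ Finset.Icc 1 n, lam k * L k * M ^ (k - 1)) * δ)
          ((∑ k ∈ Finset.Icc 1 n, lam k * l k * δ ^ (k - 1)) * M)) :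
    ∃ g, (g ∈ Gclass c d δ M ∧
        ∀ x ∈ Set.Icc c d, ∏ k ∈ Finset.Icc 1 n, (Ξ k (g^[k] x)) ^ lam k = G x) ∧
      (∀ g', g' ∈ Gclass c d δ M →
        (∀ x ∈ Set.Icc c d, ∏ k ∈ Finset.Icc 1 n, (Ξ k (g'^[k] x)) ^ lam k = G x) →
        Set.EqOn g' g (Set.Icc c d)) ∧
      (∀ G₁ g₁,
        G₁ ∈ Gclass c d ((∑ k ∈ Finset.Icc 1 n, lam k * L k * M ^ (k - 1)) * δ)
              ((∑ k ∈ Finset.Icc 1 n, lam k * l k * δ ^ (k - 1)) * M) →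
        g₁ ∈ Gclass c d δ M →
        (∀ x ∈ Set.Icc c d, ∏ k ∈ Finset.Icc 1 n, (Ξ k (g₁^[k] x)) ^ lam k = G₁ x) →
        ∀ ε, 0 ≤ ε → (∀ x ∈ Set.Icc c d, |G x - G₁ x| ≤ ε) →
          ∀ x ∈ Set.Icc c d,
            |g x - g₁ x| ≤ d / (c * (lam 1 * l 1 -
              ∑ k ∈ Finset.Icc 2 n,
                lam k * (L k * (M ^ (k - 1) - 1) / (M - 1) - l k * δ ^ (k - 1)))) * ε) := by
  classical
  have hd : 0 < d := lt_of_lt_of_le hc hcd.le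
  have hab : Real.log c ≤ Real.log d := Real.log_le_log hc hcd.le
  set a := Real.log c with ha_def
  set b := Real.log d with hb_def
  set ξ : ℕ → ℝ → ℝ := fun k t => Real.log (Ξ k (Real.exp t)) with hξ_def
  set γ : ℝ → ℝ := fun t => Real.log (G (Real.exp t)) with hγ_def
  have hξA : ∀ k, 1 ≤ k → k ≤ n → ξ k ∈ Aclass a b (l k) (L k) :=
    fun k h1 h2 => Aclass_of_Gclass hc hcd.le (hΞ k h1 h2)
  have S : Setup a b δ M n lam l L ξ :=
    ⟨hab, hn, hδ0, hδ1, hM, hlam1, hlamk, hsum, hlL, hξA, hK⟩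
  have hγA : γ ∈ Aclass a b (Kone M n lam L * δ) (Kzero δ n lam l * M) :=
    Aclass_of_Gclass hc hcd.le hG
  have hΞpos : ∀ k, 1 ≤ k → k ≤ n → ∀ x ∈ Set.Icc c d, 0 < Ξ k x :=
    fun k h1 h2 x hx => lt_of_lt_of_le hc ((hΞ k h1 h2).2.1 hx).1
  -- forward transfer: multiplicative solution gives additive solution
  have fwd : ∀ g' G' : ℝ → ℝ, Set.MapsTo g' (Set.Icc c d) (Set.Icc c d) →
      (∀ x ∈ Set.Icc c d, ∏ k ∈ Finset.Icc 1 n, (Ξ k (g'^[k] x)) ^ lam k = G' x) →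
      ∀ t ∈ Set.Icc a b,
        ∑ k ∈ Finset.Icc 1 n, lam k * ξ k ((fun s => Real.log (g' (Real.exp s)))^[k] t)
          = Real.log (G' (Real.exp t)) := by
    intro g' G' hmap hmeq t ht
    have hx : Real.exp t ∈ Set.Icc c d := exp_mapsTo hc hd t ht
    have step : ∀ k ∈ Finset.Icc 1 n,
        lam k * ξ k ((fun s => Real.log (g' (Real.exp s)))^[k] t)
          = Real.log ((Ξ k (g'^[k] (Real.exp t))) ^ lam k) := by
      intro k hk
      rw [Finset.mem_Icc] at hk
      have hw : g'^[k] (Real.exp t) ∈ Set.Icc c d := hmap.iterate k hx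
      have hw0 : 0 < g'^[k] (Real.exp t) := lt_of_lt_of_le hc hw.1
      have hΞw : 0 < Ξ k (g'^[k] (Real.exp t)) := hΞpos k hk.1 hk.2 _ hw
      rw [g'_iterate hc hmap k hx, Real.log_rpow hΞw]
      simp only [hξ_def]
      rw [Real.exp_log hw0]
    rw [Finset.sum_congr rfl step, ← Real.log_prod, hmeq _ hx]
    intro k hk
    rw [Finset.mem_Icc] at hk
    exact ne_of_gt (Real.rpow_pos_of_pos (hΞpos k hk.1 hk.2 _ (hmap.iterate k hx)) _)
  -- existence
  obtain ⟨h, hhA, heq⟩ := Setup2.additive_exists S hγA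
  set g : ℝ → ℝ := fun x => Real.exp (h (Real.log x)) with hg_def
  have hgG : g ∈ Gclass c d δ M := Gclass_of_Aclass hc hcd.le hhA
  have hmeq : ∀ x ∈ Set.Icc c d, ∏ k ∈ Finset.Icc 1 n, (Ξ k (g^[k] x)) ^ lam k = G x := by
    intro x hx
    have hx0 : 0 < x := lt_of_lt_of_le hc hx.1
    have ht : Real.log x ∈ Set.Icc a b := log_mapsTo hc x hx
    have hstep : ∀ k ∈ Finset.Icc 1 n, (Ξ k (g^[k] x)) ^ lam k
        = Real.exp (lam k * ξ k (h^[k] (Real.log x))) := by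
      intro k hk
      rw [Finset.mem_Icc] at hk
      have hwa : h^[k] (Real.log x) ∈ Set.Icc a b := Aclass.iterate_mapsTo hhA k ht
      have hw : Real.exp (h^[k] (Real.log x)) ∈ Set.Icc c d := exp_mapsTo hc hd _ hwa
      have hΞw : 0 < Ξ k (Real.exp (h^[k] (Real.log x))) := hΞpos k hk.1 hk.2 _ hw
      simp only [hg_def]
      rw [g_iterate h k hx0, Real.rpow_def_of_pos hΞw]
      simp only [hξ_def]
      rw [mul_comm]
    rw [Finset.prod_congr rfl hstep, ← Real.exp_sum, heq _ ht]
    simp only [hγ_def]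
    rw [Real.exp_log hx0, Real.exp_log (lt_of_lt_of_le hc (hG.2.1 hx).1)]
  refine ⟨g, ⟨hgG, hmeq⟩, ?_, ?_⟩
  · -- uniqueness
    intro g' hg' hmeq' x hx
    have heq' := fwd g' G hg'.2.1 hmeq'
    have hh'A : (fun s => Real.log (g' (Real.exp s))) ∈ Aclass a b δ M :=
      Aclass_of_Gclass hc hcd.le hg'
    have hstab := Setup2.additive_stability S hh'A hhA heq' heq (ε := 0) le_rfl
      (fun t ht => by simp [hγ_def])
    have hx0 : 0 < x := lt_of_lt_of_le hc hx.1
    have ht : Real.log x ∈ Set.Icc a b := log_mapsTo hc x hx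
    have h0 := hstab _ ht
    rw [zero_div] at h0
    have hh'x : Real.log (g' (Real.exp (Real.log x))) = h (Real.log x) := by
      have := abs_nonneg ((fun s => Real.log (g' (Real.exp s))) (Real.log x) - h (Real.log x))
      have h00 : (fun s => Real.log (g' (Real.exp s))) (Real.log x) - h (Real.log x) = 0 :=
        abs_eq_zero.1 (le_antisymm h0 (abs_nonneg _))
      simpa using sub_eq_zero.1 h00
    have hgx' : 0 < g' x := lt_of_lt_of_le hc (hg'.2.1 hx).1
    calc g' x = Real.exp (Real.log (g' (Real.exp (Real.log x)))) := by
          rw [Real.exp_log hx0, Real.exp_log hgx']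
    _ = Real.exp (h (Real.log x)) := by rw [hh'x]
    _ = g x := rfl
  · -- stability
    intro G₁ g₁ hG₁ hg₁ hmeq₁ ε hε hGd x hx
    have hh₁A : (fun s => Real.log (g₁ (Real.exp s))) ∈ Aclass a b δ M :=
      Aclass_of_Gclass hc hcd.le hg₁
    have heq₁ := fwd g₁ G₁ hg₁.2.1 hmeq₁
    have hγd : ∀ t ∈ Set.Icc a b,
        |γ t - (fun s => Real.log (G₁ (Real.exp s))) t| ≤ ε / c := by
      intro t ht
      have hxt : Real.exp t ∈ Set.Icc c d := exp_mapsTo hc hd t ht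
      simp only [hγ_def]
      calc |Real.log (G (Real.exp t)) - Real.log (G₁ (Real.exp t))|
          ≤ |G (Real.exp t) - G₁ (Real.exp t)| / c :=
            log_abs_sub hc (hG.2.1 hxt).1 (hG₁.2.1 hxt).1
      _ ≤ ε / c := by gcongr; exact hGd _ hxt
    have hstab := Setup2.additive_stability S hhA hh₁A heq heq₁
      (div_nonneg hε (le_of_lt hc)) hγd
    have ht : Real.log x ∈ Set.Icc a b := log_mapsTo hc x hx
    have hx0 : 0 < x := lt_of_lt_of_le hc hx.1
    have hg₁x : 0 < g₁ x := lt_of_lt_of_le hc (hg₁.2.1 hx).1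
    have hg₁x_eq : g₁ x = Real.exp ((fun s => Real.log (g₁ (Real.exp s))) (Real.log x)) := by
      simp only
      rw [Real.exp_log hx0, Real.exp_log hg₁x]
    have hhb : h (Real.log x) ≤ b := (hhA.2.1 ht).2
    have hh₁b : (fun s => Real.log (g₁ (Real.exp s))) (Real.log x) ≤ b := (hh₁A.2.1 ht).2
    have hKpos : 0 < KOp δ M n lam l L := S.hK
    have hfinal : |g x - g₁ x| ≤ d / (c * KOp δ M n lam l L) * ε := by
      calc |g x - g₁ x|
          = |Real.exp (h (Real.log x))
            - Real.exp ((fun s => Real.log (g₁ (Real.exp s))) (Real.log x))| := by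
            rw [hg₁x_eq]
      _ ≤ d * |h (Real.log x) - (fun s => Real.log (g₁ (Real.exp s))) (Real.log x)| :=
            exp_abs_sub hd hhb hh₁b
      _ ≤ d * ((ε / c) / KOp δ M n lam l L) :=
            mul_le_mul_of_nonneg_left (hstab _ ht) (le_of_lt hd)
      _ = d / (c * KOp δ M n lam l L) * ε := by
            field_simp
    exact hfinal
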